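/- Let p ∈ ℝ², r > 0, and 0 < δ ≤ (√2 − 1)r. Let a = p + (r,0) and b = p + (0,r), and let a' = p + (r + s, 0), b' = p + (0, r + t) for some 0 ≤ s, t ≤ δ. Then among the two circles of radius r' := r + ε (with circumradius parameters consistent, r ≤ r' ≤ r + δ) passing through a' and b', the one whose center q is on the same side as p satisfies ‖q − p‖ ≤ r'. -/

import Mathlib

open Real

noncomputable section

abbrev Pt (d : ℕ) := EuclideanSpace ℝ (Fin d)

/-- One step of a coupling: advance the first and/or the second index by exactly 1. -/
def CouplingStep (a b : ℕ × ℕ) : Prop :=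
  (b.1 = a.1 + 1 ∧ b.2 = a.2) ∨ (b.1 = a.1 ∧ b.2 = a.2 + 1) ∨
    (b.1 = a.1 + 1 ∧ b.2 = a.2 + 1)

/-- A coupling between a curve with `k` vertices and one with `l` vertices
(0-based indices): starts at `(0,0)`, ends at `(k-1, l-1)`, monotone unit steps. -/
def IsCoupling (k l : ℕ) (c : List (ℕ × ℕ)) : Prop :=
  c.head? = some (0, 0) ∧ c.getLast? = some (k - 1, l - 1) ∧
    c.Chain' CouplingStep ∧ ∀ ij ∈ c, ij.1 < k ∧ ij.2 < l

/-- The maximum distance over the coupled pairs of a coupling. -/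
def couplingCost {d : ℕ} (P Q : List (Pt d)) (c : List (ℕ × ℕ)) : ℝ :=
  c.foldr (fun ij acc => max (dist (P.getD ij.1 0) (Q.getD ij.2 0)) acc) 0

/-- The discrete Fréchet distance between two polygonal curves, given as lists
of their vertices. -/
def dDF {d : ℕ} (P Q : List (Pt d)) : ℝ :=
  sInf { m : ℝ | ∃ c, IsCoupling P.length Q.length c ∧ m = couplingCost P Q c }

/-- The set of nearest neighbors of a query curve `Q` in a finite set `S` of
curves, under the discrete Fréchet distance. -/
def NN {d : ℕ} (S : Finset (List (Pt d))) (Q : List (Pt d)) : Set (List (Pt d)) :=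
  { P | P ∈ S ∧ ∀ P' ∈ S, dDF Q P ≤ dDF Q P' }

/-- The point of `ℝ²` with given coordinates. -/
def e2 (x y : ℝ) : Pt 2 := (WithLp.equiv 2 (Fin 2 → ℝ)).symm ![x, y]

/-- The point of `ℝ¹` with given coordinate. -/
def e1 (x : ℝ) : Pt 1 := (WithLp.equiv 2 (Fin 1 → ℝ)).symm ![x]


lemma dist_e2_e2_aux (p : Pt 2) (x y x' y' : ℝ) :
    dist (p + e2 x y) (p + e2 x' y') = Real.sqrt ((x - x')^2 + (y - y')^2) := by
  rw [dist_add_left, EuclideanSpace.dist_eq, Fin.sum_univ_two]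
  simp [e2, Real.dist_eq, sq_abs]

lemma dist_e2_p_aux (p : Pt 2) (x y : ℝ) :
    dist (p + e2 x y) p = Real.sqrt (x^2 + y^2) := by
  rw [dist_eq_norm, add_sub_cancel_left, EuclideanSpace.norm_eq, Fin.sum_univ_two]
  simp [e2, sq_abs]

lemma alg1_aux (R T L h r' : ℝ) (hL : L ≠ 0) (hL2 : L^2 = R^2+T^2)
    (hh2 : h^2 = r'^2 - L^2/4) :
    (R/2 - h*T/L - R)^2 + ((T/2 - h*R/L) - 0)^2 = r'^2 := by
  field_simp
  linear_combination (-(L^2+4*h^2))*hL2 + 4*L^2*hh2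

lemma alg2_aux (R T L h r' : ℝ) (hL : L ≠ 0) (hL2 : L^2 = R^2+T^2)
    (hh2 : h^2 = r'^2 - L^2/4) :
    (R/2 - h*T/L - 0)^2 + ((T/2 - h*R/L) - T)^2 = r'^2 := by
  field_simp
  linear_combination (-(L^2+4*h^2))*hL2 + 4*L^2*hh2

lemma alg3_aux (R T L h r' : ℝ) (hL : L ≠ 0) (hL2 : L^2 = R^2+T^2)
    (hh2 : h^2 = r'^2 - L^2/4) :
    (R/2 - h*T/L)^2 + (T/2 - h*R/L)^2 = r'^2 - 2*h*R*T/L := by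
  field_simp
  linear_combination (-(L^2+4*h^2))*hL2 + 4*L^2*hh2

/-- if `a'` and `b'` lie on the two positive coordinate axes
through `p` at distances in `[r, r + δ]` from `p`, with `δ ≤ (√2 - 1) r`, and
`r'` is at least these distances, then there is a center `q` at distance `r'`
from both `a'` and `b'` with `‖q - p‖ ≤ r'`. -/
theorem two_axes_circle (p : Pt 2) (r δ s t r' : ℝ) (hr : 0 < r)
    (hδ : 0 < δ) (hδ' : δ ≤ (Real.sqrt 2 - 1) * r)
    (hs : 0 ≤ s) (hs' : s ≤ δ) (ht : 0 ≤ t) (ht' : t ≤ δ)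
    (hr' : max (dist (p + e2 (r + s) 0) p) (dist (p + e2 0 (r + t)) p) ≤ r') :
    ∃ q : Pt 2, dist q (p + e2 (r + s) 0) = r' ∧
      dist q (p + e2 0 (r + t)) = r' ∧ dist q p ≤ r' := by
  set R := r + s with hRdef
  set T := r + t with hTdef
  have hR0 : 0 < R := by positivity
  have hT0 : 0 < T := by positivity
  have hdA : dist (p + e2 R 0) p = R := by
    rw [dist_e2_p_aux]; simpa using Real.sqrt_sq hR0.le
  have hdB : dist (p + e2 0 T) p = T := by
    rw [dist_e2_p_aux]; simpa using Real.sqrt_sq hT0.le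
  rw [hdA, hdB] at hr'
  have hRr : R ≤ r' := le_trans (le_max_left _ _) hr'
  have hTr : T ≤ r' := le_trans (le_max_right _ _) hr'
  have hr'0 : 0 < r' := lt_of_lt_of_le hR0 hRr
  set L := Real.sqrt (R^2 + T^2) with hLdef
  have hL0 : 0 < L := Real.sqrt_pos.2 (by positivity)
  have hL2 : L^2 = R^2 + T^2 := Real.sq_sqrt (by positivity)
  have hnn : 0 ≤ r'^2 - L^2/4 := by nlinarith
  set h := Real.sqrt (r'^2 - L^2/4) with hhdef
  have hh0 : 0 ≤ h := Real.sqrt_nonneg _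
  have hh2 : h^2 = r'^2 - L^2/4 := Real.sq_sqrt hnn
  refine ⟨p + e2 (R/2 - h*T/L) (T/2 - h*R/L), ?_, ?_, ?_⟩
  · rw [dist_e2_e2_aux, alg1_aux R T L h r' hL0.ne' hL2 hh2]
    exact Real.sqrt_sq hr'0.le
  · rw [dist_e2_e2_aux, alg2_aux R T L h r' hL0.ne' hL2 hh2]
    exact Real.sqrt_sq hr'0.le
  · rw [dist_e2_p_aux]
    calc Real.sqrt ((R/2 - h*T/L)^2 + (T/2 - h*R/L)^2) ≤ Real.sqrt (r'^2) := by
          apply Real.sqrt_le_sqrt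
          have hpos : 0 ≤ 2*h*R*T/L := by positivity
          have key := alg3_aux R T L h r' hL0.ne' hL2 hh2
          linarith
      _ = r' := Real.sqrt_sq hr'0.le
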